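/- Let T, T' ∈ 𝔰𝔲(2) be nonzero with exp(T)·exp(T') ≠ exp(T')·exp(T). Then exp(iℝT) ∩ exp(iℝT') = {I}. -/

import Mathlib

open Matrix

private lemma span_of_commute2 (M X : Matrix (Fin 2) (Fin 2) ℂ)
    (hns : ∀ c : ℂ, M ≠ c • (1 : Matrix (Fin 2) (Fin 2) ℂ))
    (hX : X * M = M * X) : ∃ α β : ℂ, X = α • 1 + β • M := by
  have e00 : X 0 0 * M 0 0 + X 0 1 * M 1 0 = M 0 0 * X 0 0 + M 0 1 * X 1 0 := by
    simpa [Matrix.mul_apply, Fin.sum_univ_two] using congrFun (congrFun hX 0) 0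
  have e01 : X 0 0 * M 0 1 + X 0 1 * M 1 1 = M 0 0 * X 0 1 + M 0 1 * X 1 1 := by
    simpa [Matrix.mul_apply, Fin.sum_univ_two] using congrFun (congrFun hX 0) 1
  have e10 : X 1 0 * M 0 0 + X 1 1 * M 1 0 = M 1 0 * X 0 0 + M 1 1 * X 1 0 := by
    simpa [Matrix.mul_apply, Fin.sum_univ_two] using congrFun (congrFun hX 1) 0
  by_cases hb : M 0 1 ≠ 0
  · refine ⟨X 0 0 - X 0 1 / M 0 1 * M 0 0, X 0 1 / M 0 1, ?_⟩
    ext i j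
    fin_cases i <;> fin_cases j <;>
      simp only [Matrix.add_apply, Matrix.smul_apply, Matrix.one_apply_eq,
        Matrix.one_apply_ne (by decide : (0 : Fin 2) ≠ 1),
        Matrix.one_apply_ne (by decide : (1 : Fin 2) ≠ 0), smul_eq_mul, Fin.mk_zero, Fin.mk_one]
    · field_simp
      ring
    · field_simp
      ring
    · field_simp
      linear_combination -e00
    · field_simp
      linear_combination -e01
  · push_neg at hb
    by_cases hc : M 1 0 ≠ 0
    · refine ⟨X 0 0 - X 1 0 / M 1 0 * M 0 0, X 1 0 / M 1 0, ?_⟩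
      ext i j
      fin_cases i <;> fin_cases j <;>
        simp only [Matrix.add_apply, Matrix.smul_apply, Matrix.one_apply_eq,
          Matrix.one_apply_ne (by decide : (0 : Fin 2) ≠ 1),
          Matrix.one_apply_ne (by decide : (1 : Fin 2) ≠ 0), smul_eq_mul, Fin.mk_zero, Fin.mk_one]
      · field_simp
        ring
      · field_simp
        linear_combination e00
      · field_simp
        ring
      · field_simp
        linear_combination e10
    · push_neg at hc
      have had : M 0 0 ≠ M 1 1 := by
        intro h
        apply hns (M 0 0)
        ext i j
        fin_cases i <;> fin_cases j <;>
          simp [Matrix.smul_apply, Matrix.one_apply, hb, hc, h]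
      have hy : X 0 1 = 0 := by
        have h := e01
        rw [hb] at h
        have : X 0 1 * (M 1 1 - M 0 0) = 0 := by linear_combination h
        rcases mul_eq_zero.mp this with h' | h'
        · exact h'
        · exact absurd (by linear_combination -h') had
      have hz : X 1 0 = 0 := by
        have h := e10
        rw [hc] at h
        have : X 1 0 * (M 0 0 - M 1 1) = 0 := by linear_combination h
        rcases mul_eq_zero.mp this with h' | h'
        · exact h'
        · exact absurd (by linear_combination h') had
      refine ⟨X 0 0 - (X 0 0 - X 1 1) / (M 0 0 - M 1 1) * M 0 0,
        (X 0 0 - X 1 1) / (M 0 0 - M 1 1), ?_⟩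
      have hsub : M 0 0 - M 1 1 ≠ 0 := sub_ne_zero.mpr had
      ext i j
      fin_cases i <;> fin_cases j <;>
        simp only [Matrix.add_apply, Matrix.smul_apply, Matrix.one_apply_eq,
          Matrix.one_apply_ne (by decide : (0 : Fin 2) ≠ 1),
          Matrix.one_apply_ne (by decide : (1 : Fin 2) ≠ 0), smul_eq_mul, Fin.mk_zero, Fin.mk_one]
      · field_simp
        ring
      · linear_combination hy - (X 0 0 - X 1 1) / (M 0 0 - M 1 1) * hb
      · linear_combination hz - (X 0 0 - X 1 1) / (M 0 0 - M 1 1) * hc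
      · field_simp
        ring

theorem stmt8 (T T' : Matrix (Fin 2) (Fin 2) ℂ)
    (hT : Tᴴ = -T) (hTtr : T.trace = 0) (hT0 : T ≠ 0)
    (hT' : T'ᴴ = -T') (hT'tr : T'.trace = 0) (hT'0 : T' ≠ 0)
    (hnc : NormedSpace.exp T * NormedSpace.exp T'
        ≠ NormedSpace.exp T' * NormedSpace.exp T) :
    (Set.range fun t : ℝ => NormedSpace.exp (((t : ℂ) * Complex.I) • T)) ∩
      (Set.range fun t : ℝ => NormedSpace.exp (((t : ℂ) * Complex.I) • T')) = {1} := by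
  ext x
  simp only [Set.mem_inter_iff, Set.mem_range, Set.mem_singleton_iff]
  constructor
  · rintro ⟨⟨s, rfl⟩, ⟨t, ht⟩⟩
    by_cases hs : s = 0
    · subst hs
      simp [NormedSpace.exp_zero]
    by_cases hts : t = 0
    · rw [← ht]
      subst hts
      simp [NormedSpace.exp_zero]
    -- main case
    set A : Matrix (Fin 2) (Fin 2) ℂ := ((s : ℂ) * Complex.I) • T with hAdef
    set M : Matrix (Fin 2) (Fin 2) ℂ := NormedSpace.exp A with hMdef
    have hcs : ((s : ℂ) * Complex.I) ≠ 0 :=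
      mul_ne_zero (by exact_mod_cast hs) Complex.I_ne_zero
    have hct : ((t : ℂ) * Complex.I) ≠ 0 :=
      mul_ne_zero (by exact_mod_cast hts) Complex.I_ne_zero
    have hTM : T * M = M * T := by
      have h1 : Commute A M := (Commute.refl A).exp_right
      have h2 : ((s : ℂ) * Complex.I) • (T * M) = ((s : ℂ) * Complex.I) • (M * T) := by
        simpa [hAdef, smul_mul_assoc, mul_smul_comm] using h1.eq
      exact smul_right_injective _ hcs h2
    have hT'M : T' * M = M * T' := by
      have h1 : Commute (((t : ℂ) * Complex.I) • T') M := by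
        rw [← ht]
        exact (Commute.refl _).exp_right
      have h2 : ((t : ℂ) * Complex.I) • (T' * M) = ((t : ℂ) * Complex.I) • (M * T') := by
        simpa [smul_mul_assoc, mul_smul_comm] using h1.eq
      exact smul_right_injective _ hct h2
    by_cases hscalar : ∃ c : ℂ, M = c • (1 : Matrix (Fin 2) (Fin 2) ℂ)
    · obtain ⟨c, hcM⟩ := hscalar
      -- A is Hermitian
      have hA : A.IsHermitian := by
        show Aᴴ = A
        rw [hAdef, Matrix.conjTranspose_smul, hT]
        simp [Complex.conj_ofReal, mul_neg, neg_smul, smul_neg]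
      set U : Matrix (Fin 2) (Fin 2) ℂ := (hA.eigenvectorUnitary : Matrix (Fin 2) (Fin 2) ℂ) with hUdef
      have hU1 : U * star U = 1 := Matrix.mem_unitaryGroup_iff.mp hA.eigenvectorUnitary.2
      have hU2 : star U * U = 1 := Matrix.mem_unitaryGroup_iff'.mp hA.eigenvectorUnitary.2
      have hUunit : IsUnit U := (Matrix.isUnit_iff_isUnit_det U).mpr (Matrix.isUnit_det_of_right_inverse hU1)
      have hUinv : U⁻¹ = star U := Matrix.inv_eq_right_inv hU1
      have hspec : A = U * Matrix.diagonal (RCLike.ofReal ∘ hA.eigenvalues) * star U :=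
        hA.spectral_theorem
      have hexp : M = U * Matrix.diagonal (fun i => Complex.exp (hA.eigenvalues i)) * star U := by
        rw [hMdef]
        conv_lhs => rw [hspec, ← hUinv, Matrix.exp_conj U _ hUunit]
        rw [hUinv, Matrix.exp_diagonal]
        have hfun : (NormedSpace.exp (RCLike.ofReal ∘ hA.eigenvalues) : Fin 2 → ℂ)
            = fun i => Complex.exp (hA.eigenvalues i) := by
          funext i
          rw [Pi.coe_exp, ← Complex.exp_eq_exp_ℂ]
          rfl
        rw [hfun]
      have hdiag : Matrix.diagonal (fun i => Complex.exp (hA.eigenvalues i))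
          = c • (1 : Matrix (Fin 2) (Fin 2) ℂ) := by
        have h2 : star U * M * U
            = Matrix.diagonal (fun i => Complex.exp (hA.eigenvalues i)) := by
          rw [hexp, ← mul_assoc, ← mul_assoc, hU2, one_mul, mul_assoc, hU2, mul_one]
        rw [← h2, hcM]
        simp [Matrix.mul_smul, Matrix.smul_mul, hU2]
      have h0 : Complex.exp (hA.eigenvalues 0) = c := by
        simpa using congrFun (congrFun hdiag 0) 0
      have h1 : Complex.exp (hA.eigenvalues 1) = c := by
        simpa using congrFun (congrFun hdiag 1) 1
      have htr : (hA.eigenvalues 0 : ℂ) + (hA.eigenvalues 1 : ℂ) = 0 := by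
        have ht0 : A.trace = 0 := by
          rw [hAdef, Matrix.trace_smul, hTtr, smul_zero]
        have h3 : A.trace = (hA.eigenvalues 0 : ℂ) + (hA.eigenvalues 1 : ℂ) := by
          conv_lhs => rw [hspec]
          rw [Matrix.trace_mul_comm, ← mul_assoc, hU2, one_mul, Matrix.trace_diagonal,
            Fin.sum_univ_two]
          rfl
        rw [← h3, ht0]
      have heq : hA.eigenvalues 0 = hA.eigenvalues 1 := by
        have : Complex.exp (hA.eigenvalues 0) = Complex.exp (hA.eigenvalues 1) := by
          rw [h0, h1]
        have habs := congrArg (‖·‖) this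
        rw [Complex.norm_exp, Complex.norm_exp] at habs
        simpa using Real.exp_injective (by simpa using habs)
      have hl0 : hA.eigenvalues 0 = 0 := by
        have h4 : hA.eigenvalues 0 + hA.eigenvalues 1 = 0 := by exact_mod_cast htr
        linarith [heq]
      have hl1 : hA.eigenvalues 1 = 0 := heq ▸ hl0
      have hA0 : A = 0 := by
        rw [hspec]
        have h5 : (RCLike.ofReal ∘ hA.eigenvalues : Fin 2 → ℂ) = 0 := by
          funext i
          have h6 : hA.eigenvalues i = 0 := by
            fin_cases i
            · exact hl0
            · exact hl1
          show (RCLike.ofReal (hA.eigenvalues i) : ℂ) = 0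
          rw [h6]
          simp
        rw [h5]
        rw [show Matrix.diagonal (0 : Fin 2 → ℂ) = 0 from Matrix.diagonal_zero,
          mul_zero, zero_mul]
      show M = 1
      rw [hMdef, hA0, NormedSpace.exp_zero]
    · push_neg at hscalar
      obtain ⟨α, β, hTr⟩ := span_of_commute2 M T hscalar hTM
      obtain ⟨γ, δ, hT'r⟩ := span_of_commute2 M T' hscalar hT'M
      have hcomm : Commute T T' := by
        rw [hTr, hT'r]
        have h1 : Commute (α • (1 : Matrix (Fin 2) (Fin 2) ℂ) + β • M) M :=
          (((Commute.one_left M).smul_left α).add_left ((Commute.refl M).smul_left β))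
        exact (((Commute.one_right _).smul_right γ).add_right (h1.smul_right δ))
      exact absurd (hcomm.exp).eq hnc
  · rintro rfl
    exact ⟨⟨0, by simp [NormedSpace.exp_zero]⟩, ⟨0, by simp [NormedSpace.exp_zero]⟩⟩
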